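/- If A is an n×n complex matrix with numerical range contained in the sector S_α for some α ∈ [0, π/2), then A is invertible and the numerical range of A⁻¹ is also contained in S_α. -/

import Mathlib

open Matrix
open scoped ComplexOrder

noncomputable section
namespace Paper

variable {n : ℕ}

/-- Real part `(A + Aᴴ)/2`. -/
def re (A : Matrix (Fin n) (Fin n) ℂ) : Matrix (Fin n) (Fin n) ℂ := (2⁻¹ : ℂ) • (A + Aᴴ)

/-- Imaginary part `(A - Aᴴ)/(2i)`. -/
def im (A : Matrix (Fin n) (Fin n) ℂ) : Matrix (Fin n) (Fin n) ℂ :=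
  (2 * Complex.I)⁻¹ • (A - Aᴴ)

/-- The sector `S_α`. -/
def sector (α : ℝ) : Set ℂ := {z | 0 < z.re ∧ |z.im| ≤ z.re * Real.tan α}

/-- Numerical range of a matrix. -/
def numericalRange (A : Matrix (Fin n) (Fin n) ℂ) : Set ℂ :=
  {z | ∃ x : Fin n → ℂ, star x ⬝ᵥ x = 1 ∧ z = star x ⬝ᵥ (A *ᵥ x)}

/-- Loewner order: `X ≤ Y` iff `Y - X` is positive semidefinite. -/
def loewnerLE (X Y : Matrix (Fin n) (Fin n) ℂ) : Prop := (Y - X).PosSemidef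

lemma re_isHermitian (A : Matrix (Fin n) (Fin n) ℂ) : (re A).IsHermitian := by
  show ((2⁻¹ : ℂ) • (A + Aᴴ))ᴴ = (2⁻¹ : ℂ) • (A + Aᴴ)
  rw [Matrix.conjTranspose_smul, Matrix.conjTranspose_add,
    Matrix.conjTranspose_conjTranspose, add_comm Aᴴ A]
  simp

/-- The `j`-th largest element of `v` (descending sort). -/
def nthLargest (v : Fin n → ℝ) (j : Fin n) : ℝ :=
  ((List.ofFn v).mergeSort (fun a b => decide (b ≤ a))).get
    (Fin.cast (by simp) j)

/-- `j`-th largest eigenvalue of a Hermitian matrix. -/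
def eigDesc {A : Matrix (Fin n) (Fin n) ℂ} (hA : A.IsHermitian) (j : Fin n) : ℝ :=
  nthLargest hA.eigenvalues j

/-- `j`-th largest singular value. -/
def singular (A : Matrix (Fin n) (Fin n) ℂ) (j : Fin n) : ℝ :=
  nthLargest (fun i => Real.sqrt ((Matrix.isHermitian_conjTranspose_mul_self A).eigenvalues i)) j

/-- The old Mathlib `Matrix.PosSemidef.sqrt` (removed), with its old definition. -/
def posSemidefSqrt {A : Matrix (Fin n) (Fin n) ℂ} (hA : A.PosSemidef) : Matrix (Fin n) (Fin n) ℂ :=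
  hA.1.eigenvectorUnitary.1 * diagonal ((↑) ∘ (fun x : ℝ => Real.sqrt x) ∘ hA.1.eigenvalues) *
    (star hA.1.eigenvectorUnitary : Matrix (Fin n) (Fin n) ℂ)

/-- Weighted geometric mean of positive definite matrices. -/
def sharp (v : ℝ) {A B : Matrix (Fin n) (Fin n) ℂ} (hA : A.PosDef) (hB : B.PosDef) :
    Matrix (Fin n) (Fin n) ℂ :=
  posSemidefSqrt hA.posSemidef *
    (Matrix.isHermitian_mul_mul_conjTranspose (posSemidefSqrt hA.posSemidef)⁻¹ hB.1).cfc
      (fun x => Real.rpow x v) * posSemidefSqrt hA.posSemidef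

/-- Weighted arithmetic mean. -/
def arith (v : ℝ) (A B : Matrix (Fin n) (Fin n) ℂ) : Matrix (Fin n) (Fin n) ℂ :=
  (1 - v) • A + v • B

/-- Weighted harmonic mean. -/
def harm (v : ℝ) (A B : Matrix (Fin n) (Fin n) ℂ) : Matrix (Fin n) (Fin n) ℂ :=
  ((1 - v) • A⁻¹ + v • B⁻¹)⁻¹

/-- Kantorovich constant. -/
def K (h : ℝ) : ℝ := (h + 1) ^ 2 / (4 * h)


lemma sector_key {α : ℝ} {A : Matrix (Fin n) (Fin n) ℂ}
    (hA : numericalRange A ⊆ sector α) {x : Fin n → ℂ} (hx : x ≠ 0) :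
    0 < (star x ⬝ᵥ (A *ᵥ x)).re ∧
      |(star x ⬝ᵥ (A *ᵥ x)).im| ≤ (star x ⬝ᵥ (A *ᵥ x)).re * Real.tan α := by
  set c : ℝ := ∑ i, Complex.normSq (x i) with hc
  have hc0 : 0 < c := by
    have hex : ∃ i, x i ≠ 0 := by
      by_contra h; push_neg at h; exact hx (funext h)
    obtain ⟨i, hi⟩ := hex
    exact Finset.sum_pos' (fun j _ => Complex.normSq_nonneg _)
      ⟨i, Finset.mem_univ i, Complex.normSq_pos.2 hi⟩
  have hxx : star x ⬝ᵥ x = (c : ℂ) := by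
    simp [dotProduct, hc, Complex.normSq_eq_conj_mul_self]
  set s : ℝ := (Real.sqrt c)⁻¹ with hs
  have hss : s * s = c⁻¹ := by
    rw [hs, ← mul_inv]
    rw [Real.mul_self_sqrt hc0.le]
  set u : Fin n → ℂ := (s : ℂ) • x with hu
  have hu1 : star u ⬝ᵥ u = 1 := by
    rw [hu, star_smul, smul_dotProduct, dotProduct_smul, hxx]
    rw [smul_eq_mul, smul_eq_mul, Complex.star_def, Complex.conj_ofReal, ← mul_assoc,
      ← Complex.ofReal_mul, hss, ← Complex.ofReal_mul, inv_mul_cancel₀ hc0.ne',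
      Complex.ofReal_one]
  have huA : star u ⬝ᵥ (A *ᵥ u) = (c⁻¹ : ℂ) * (star x ⬝ᵥ (A *ᵥ x)) := by
    rw [hu, star_smul, smul_dotProduct, mulVec_smul, dotProduct_smul]
    rw [smul_eq_mul, smul_eq_mul, Complex.star_def, Complex.conj_ofReal, ← mul_assoc,
      ← Complex.ofReal_mul, hss, Complex.ofReal_inv]
  have hmem : (c⁻¹ : ℂ) * (star x ⬝ᵥ (A *ᵥ x)) ∈ sector α := by
    rw [← huA]
    exact hA ⟨u, hu1, rfl⟩
  obtain ⟨h1, h2⟩ := hmem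
  set w := star x ⬝ᵥ (A *ᵥ x)
  have hre : ((c⁻¹ : ℂ) * w).re = c⁻¹ * w.re := by
    simp [Complex.mul_re]
  have him : ((c⁻¹ : ℂ) * w).im = c⁻¹ * w.im := by
    simp [Complex.mul_im]
  rw [hre] at h1 h2
  rw [him] at h2
  constructor
  · have hcc : c * (c⁻¹ * w.re) = w.re := by field_simp
    nlinarith [mul_pos hc0 h1]
  · rw [abs_mul, abs_of_pos (inv_pos.2 hc0)] at h2
    calc |w.im| = c * (c⁻¹ * |w.im|) := by field_simp
    _ ≤ c * (c⁻¹ * w.re * Real.tan α) := by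
        apply mul_le_mul_of_nonneg_left _ hc0.le
        linarith
    _ = w.re * Real.tan α := by field_simp

/-- the inverse of a sector matrix is a sector matrix. -/
theorem numericalRange_inv_subset_sector (α : ℝ) (hα : α ∈ Set.Ico 0 (Real.pi / 2))
    (A : Matrix (Fin n) (Fin n) ℂ) (hA : numericalRange A ⊆ sector α) :
    IsUnit A.det ∧ numericalRange A⁻¹ ⊆ sector α := by
  have hdet : IsUnit A.det := by
    rw [isUnit_iff_ne_zero]
    intro hd
    obtain ⟨v, hv0, hv⟩ := (Matrix.exists_mulVec_eq_zero_iff).2 hd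
    have := (sector_key hA hv0).1
    rw [hv] at this
    simp at this
  refine ⟨hdet, ?_⟩
  rintro z ⟨x, hx1, rfl⟩
  have hx0 : x ≠ 0 := by
    rintro rfl; simp at hx1
  set y : Fin n → ℂ := A⁻¹ *ᵥ x with hy
  have hAy : A *ᵥ y = x := by
    rw [hy, Matrix.mulVec_mulVec, Matrix.mul_nonsing_inv A hdet, Matrix.one_mulVec]
  have hy0 : y ≠ 0 := by
    rintro h
    rw [h, Matrix.mulVec_zero] at hAy
    exact hx0 hAy.symm
  set w := star y ⬝ᵥ (A *ᵥ y) with hw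
  have hz : star x ⬝ᵥ (A⁻¹ *ᵥ x) = star w := by
    rw [hw, hAy, ← hy, ← hAy]
    simp only [dotProduct, star_sum, star_mul', star_star, Pi.star_apply]
    exact Finset.sum_congr rfl fun i _ => mul_comm _ _
  obtain ⟨h1, h2⟩ := sector_key hA hy0
  rw [hz]
  constructor
  · simpa using h1
  · simpa using h2

end Paper
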